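/- arXiv:2605.10580 — 5 statements merged into one kernel-verified Lean document; each statement's English description precedes it below -/
import Mathlib

section
/- Let D be a finite poset (viewed as a category) and I : D → Top a functor such that: (i) for every object x, I(x) is a T1 normal topological space; (ii) for every morphism f of D, the continuous map I(f) is injective and closed; (iii) whenever f₁ : x₁ → y and f₂ : x₂ → y are morphisms of D with I(f₁)(I(x₁)) ∩ I(f₂)(I(x₂)) ≠ ∅, there exist finitely many objects w¹,…,wⁿ of D and morphisms g₁ʲ : wʲ → x₁, g₂ʲ : wʲ → x₂ with f₁∘g₁ʲ = f₂∘g₂ʲ for all j and I(f₁)(I(x₁)) ∩ I(f₂)(I(x₂)) = ⋃ⱼ I(f₁∘g₁ʲ)(I(wʲ)). Then the colimit colim_D I is a T1 normal topological space. -/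
open CategoryTheory Limits Topology Set

section Gluing

variable {X : Type} [TopologicalSpace X]

/-- Pasting lemma: a function continuous on two closed sets is continuous on their union. -/
lemma continuousOn_union_of_isClosed' {Y : Type} [TopologicalSpace Y] {f : X → Y}
    {s t : Set X} (hs : IsClosed s) (ht : IsClosed t)
    (hfs : ContinuousOn f s) (hft : ContinuousOn f t) : ContinuousOn f (s ∪ t) := by
  intro x hx
  rw [continuousWithinAt_union]
  constructor
  · rcases Classical.em (x ∈ s) with h | h
    · exact hfs x h
    · exact continuousWithinAt_of_notMem_closure (by rwa [hs.closure_eq])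
  · rcases Classical.em (x ∈ t) with h | h
    · exact hft x h
    · exact continuousWithinAt_of_notMem_closure (by rwa [ht.closure_eq])

/-- If `X` is covered by two closed normal subspaces, then `X` is normal. -/
lemma normalSpace_of_two_closed {A B : Set X} (hA : IsClosed A) (hB : IsClosed B)
    (hAB : A ∪ B = Set.univ) (hnA : NormalSpace A) (hnB : NormalSpace B) :
    NormalSpace X := by
  classical
  constructor
  intro E F hE hF hEF
  obtain ⟨fB, hfB0, hfB1, -⟩ :=
    exists_continuous_zero_one_of_isClosed (X := B)
      (hE.preimage continuous_subtype_val) (hF.preimage continuous_subtype_val)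
      (hEF.preimage _)
  set k : X → ℝ := fun p => if h : p ∈ B then fB ⟨p, h⟩ else if p ∈ E then 0 else 1 with hk
  have hkB : ∀ (p : X) (h : p ∈ B), k p = fB ⟨p, h⟩ := fun p h => dif_pos h
  have hkE : ∀ p ∈ E, k p = 0 := by
    intro p hp
    by_cases h : p ∈ B
    · rw [hkB p h]
      exact hfB0 (show (⟨p, h⟩ : B) ∈ Subtype.val ⁻¹' E from hp)
    · simp only [hk, dif_neg h, if_pos hp]
  have hkF : ∀ p ∈ F, k p = 1 := by
    intro p hp
    by_cases h : p ∈ B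
    · rw [hkB p h]
      exact hfB1 (show (⟨p, h⟩ : B) ∈ Subtype.val ⁻¹' F from hp)
    · have hpE : p ∉ E := fun hpE => hEF.ne_of_mem hpE hp rfl
      simp only [hk, dif_neg h, if_neg hpE]
  have hkBc : ContinuousOn k B := by
    rw [continuousOn_iff_continuous_restrict]
    have hres : B.domRestrict k = fB := funext fun p => dif_pos p.2
    rw [hres]
    exact fB.continuous
  set T : Set X := (E ∩ A) ∪ ((F ∩ A) ∪ (A ∩ B)) with hT
  have hTc : IsClosed T := (hE.inter hA).union ((hF.inter hA).union (hA.inter hB))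
  have hkT : ContinuousOn k T := by
    apply continuousOn_union_of_isClosed' (hE.inter hA) ((hF.inter hA).union (hA.inter hB))
    · exact (continuousOn_const (c := (0 : ℝ))).congr fun p hp => hkE p hp.1
    · apply continuousOn_union_of_isClosed' (hF.inter hA) (hA.inter hB)
      · exact (continuousOn_const (c := (1 : ℝ))).congr fun p hp => hkF p hp.1
      · exact hkBc.mono fun p hp => hp.2
  -- Tietze extension over the normal space `A`
  set T' : Set A := Subtype.val ⁻¹' T with hT'
  have hT'c : IsClosed T' := hTc.preimage continuous_subtype_val
  have hcont : Continuous fun p : T' => k ((p : A) : X) := by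
    have h1 := hkT.restrict
    have h2 : Continuous fun p : T' => (⟨((p : A) : X), p.2⟩ : T) :=
      Continuous.subtype_mk (continuous_subtype_val.comp continuous_subtype_val) _
    exact h1.comp h2
  obtain ⟨gA, hgA⟩ := ContinuousMap.exists_restrict_eq (Y := ℝ) hT'c ⟨_, hcont⟩
  have hgA' : ∀ (a : A), (a : X) ∈ T → gA a = k a := by
    intro a ha
    exact ContinuousMap.congr_fun hgA ⟨a, ha⟩
  set f : X → ℝ := fun p => if h : p ∈ A then gA ⟨p, h⟩ else k p with hf
  have hfA : ∀ (p : X) (h : p ∈ A), f p = gA ⟨p, h⟩ := fun p h => dif_pos h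
  have hfk : ∀ p ∈ B, f p = k p := by
    intro p hp
    by_cases h : p ∈ A
    · rw [hfA p h, hgA' ⟨p, h⟩ (Or.inr (Or.inr ⟨h, hp⟩))]
    · simp only [hf, dif_neg h]
  have hfc : Continuous f := by
    rw [← continuousOn_univ, ← hAB]
    apply continuousOn_union_of_isClosed' hA hB
    · rw [continuousOn_iff_continuous_restrict]
      have hres : A.domRestrict f = gA := funext fun p => dif_pos p.2
      rw [hres]
      exact gA.continuous
    · exact hkBc.congr hfk
  have hfE : ∀ p ∈ E, f p = 0 := by
    intro p hp
    by_cases h : p ∈ A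
    · rw [hfA p h, hgA' ⟨p, h⟩ (Or.inl ⟨hp, h⟩)]
      exact hkE p hp
    · have hpB : p ∈ B := by
        rcases (hAB ▸ Set.mem_univ p : p ∈ A ∪ B) with h' | h'
        · exact absurd h' h
        · exact h'
      rw [hfk p hpB]
      exact hkE p hp
  have hfF : ∀ p ∈ F, f p = 1 := by
    intro p hp
    by_cases h : p ∈ A
    · rw [hfA p h, hgA' ⟨p, h⟩ (Or.inr (Or.inl ⟨hp, h⟩))]
      exact hkF p hp
    · have hpB : p ∈ B := by
        rcases (hAB ▸ Set.mem_univ p : p ∈ A ∪ B) with h' | h'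
        · exact absurd h' h
        · exact h'
      rw [hfk p hpB]
      exact hkF p hp
  refine ⟨f ⁻¹' Set.Iio (1/2 : ℝ), f ⁻¹' Set.Ioi (1/2 : ℝ),
    isOpen_Iio.preimage hfc, isOpen_Ioi.preimage hfc, ?_, ?_, ?_⟩
  · intro p hp
    simp only [Set.mem_preimage, Set.mem_Iio, hfE p hp]
    norm_num
  · intro p hp
    simp only [Set.mem_preimage, Set.mem_Ioi, hfF p hp]
    norm_num
  · exact Disjoint.preimage f ((Set.Iio_disjoint_Ici le_rfl).mono_right Set.Ioi_subset_Ici_self)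

/-- A space covered by finitely many closed normal subspaces is normal. -/
lemma normalSpace_of_finite_closed_cover {ι : Type} (s : Finset ι) :
    ∀ {X : Type} [TopologicalSpace X] (A : ι → Set X),
      (∀ i, IsClosed (A i)) → (∀ i, NormalSpace (A i)) →
      (∀ p : X, ∃ i ∈ s, p ∈ A i) → NormalSpace X := by
  classical
  induction s using Finset.induction_on with
  | empty =>
    intro X _ A _ _ hcov
    refine ⟨fun E F hE hF hd => ?_⟩
    have hempty : IsEmpty X :=
      ⟨fun p => by rcases hcov p with ⟨i, hi, _⟩; exact Finset.notMem_empty i hi⟩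
    rw [Set.eq_empty_of_isEmpty E]
    exact SeparatedNhds.empty_left F
  | @insert a t ha ih =>
    intro X _ A hcl hn hcov
    set B : Set X := ⋃ j ∈ t, A j with hB
    have hBc : IsClosed B := isClosed_biUnion_finset fun j _ => hcl j
    have hnB : NormalSpace B := by
      apply ih (A := fun j => (Subtype.val : B → X) ⁻¹' A j)
      · exact fun j => (hcl j).preimage continuous_subtype_val
      · intro j
        haveI := hn j
        have emb : IsEmbedding
            (fun p : ((Subtype.val : B → X) ⁻¹' A j) => (⟨p.1.1, p.2⟩ : A j)) :=
          (IsEmbedding.subtypeVal.comp IsEmbedding.subtypeVal).codRestrict _ _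
        have hrange : Set.range
            (fun p : ((Subtype.val : B → X) ⁻¹' A j) => (⟨p.1.1, p.2⟩ : A j))
            = (Subtype.val : A j → X) ⁻¹' B := by
          ext ⟨x, hx⟩
          constructor
          · rintro ⟨p, hp⟩
            rw [← hp]
            exact p.1.2
          · intro hxB
            exact ⟨⟨⟨x, hxB⟩, hx⟩, rfl⟩
        have hce : IsClosedEmbedding
            (fun p : ((Subtype.val : B → X) ⁻¹' A j) => (⟨p.1.1, p.2⟩ : A j)) :=
          ⟨emb, hrange ▸ hBc.preimage continuous_subtype_val⟩
        exact hce.normalSpace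
      · intro p
        rcases Set.mem_iUnion₂.mp p.2 with ⟨j, hj, hpj⟩
        exact ⟨j, hj, hpj⟩
    apply normalSpace_of_two_closed (hcl a) hBc ?_ (hn a) hnB
    ext p
    simp only [Set.mem_union, Set.mem_univ, iff_true]
    rcases hcov p with ⟨i, hi, hpi⟩
    rcases Finset.mem_insert.mp hi with rfl | hit
    · exact Or.inl hpi
    · exact Or.inr (Set.mem_biUnion hit hpi)

end Gluing

section Colim

variable {D : Type} [PartialOrder D] [Fintype D] (I : D ⥤ TopCat.{0})

lemma colim_ι_map (w x : D) (f : w ⟶ x) (c : I.obj w) :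
    colimit.ι I x (I.map f c) = colimit.ι I w c := by
  have h2 := ConcreteCategory.congr_hom (colimit.w I f) c
  rw [comp_apply] at h2
  exact h2

/-- Characterization of equality in the colimit. -/
lemma colim_eq_iff
    (h2 : ∀ {x y : D} (f : x ⟶ y), Function.Injective (I.map f) ∧ IsClosedMap (I.map f))
    (h3 : ∀ {x₁ x₂ y : D} (f₁ : x₁ ⟶ y) (f₂ : x₂ ⟶ y),
      (Set.range (I.map f₁) ∩ Set.range (I.map f₂)).Nonempty →
      ∃ (n : ℕ) (w : Fin n → D) (g₁ : ∀ j, w j ⟶ x₁) (g₂ : ∀ j, w j ⟶ x₂),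
        (∀ j, g₁ j ≫ f₁ = g₂ j ≫ f₂) ∧
        Set.range (I.map f₁) ∩ Set.range (I.map f₂)
          = ⋃ j, Set.range (I.map (g₁ j ≫ f₁)))
    {x y : D} (a : I.obj x) (b : I.obj y) :
    colimit.ι I x a = colimit.ι I y b ↔
      ∃ (w : D) (f : w ⟶ x) (g : w ⟶ y) (c : I.obj w),
        I.map f c = a ∧ I.map g c = b := by
  constructor
  · intro h
    -- transfer to the colimit in `Type`
    have h' : colimit.ι (I ⋙ forget TopCat) x a = colimit.ι (I ⋙ forget TopCat) y b := by
      have hx := ConcreteCategory.congr_hom (ι_preservesColimitIso_hom (forget TopCat) I x) a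
      have hy := ConcreteCategory.congr_hom (ι_preservesColimitIso_hom (forget TopCat) I y) b
      rw [types_comp_apply] at hx hy
      rw [← hx, ← hy]
      exact congrArg _ (congrArg (fun (q : (colimit I : TopCat.{0})) => (forget TopCat).map (𝟙 (colimit I)) q) h)
    have hgen := Types.colimit_eq h'
    clear h h'
    suffices hR : ∀ p q : (Σ j : D, (I ⋙ forget TopCat).obj j),
        Relation.EqvGen ((I ⋙ forget TopCat).ColimitTypeRel) p q →
        ∃ (w : D) (f : w ⟶ p.1) (g : w ⟶ q.1) (c : I.obj w),
          I.map f c = p.2 ∧ I.map g c = q.2 by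
      exact hR ⟨x, a⟩ ⟨y, b⟩ hgen
    intro p q hpq
    induction hpq with
    | rel p q hr =>
      obtain ⟨f, hfq⟩ := hr
      refine ⟨p.1, 𝟙 p.1, f, p.2, ?_, ?_⟩
      · rw [CategoryTheory.Functor.map_id]
        rfl
      · exact hfq.symm
    | refl p =>
      refine ⟨p.1, 𝟙 p.1, 𝟙 p.1, p.2, ?_, ?_⟩ <;>
        · rw [CategoryTheory.Functor.map_id]; rfl
    | symm p q h hih =>
      obtain ⟨w, f, g, c, h1, hh2⟩ := hih
      exact ⟨w, g, f, c, hh2, h1⟩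
    | trans p q r hpq hqr ih1 ih2 =>
      obtain ⟨w₁, f₁, g₁, c₁, hf₁, hg₁⟩ := ih1
      obtain ⟨w₂, f₂, g₂, c₂, hf₂, hg₂⟩ := ih2
      have hne : (Set.range (I.map g₁) ∩ Set.range (I.map f₂)).Nonempty :=
        ⟨q.2, ⟨c₁, hg₁⟩, ⟨c₂, hf₂⟩⟩
      obtain ⟨n, w, G₁, G₂, hcomm, heq⟩ := h3 g₁ f₂ hne
      have hq : (q.2 : I.obj q.1) ∈ ⋃ j, Set.range (I.map (G₁ j ≫ g₁)) :=
        heq ▸ ⟨⟨c₁, hg₁⟩, ⟨c₂, hf₂⟩⟩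
      rw [Set.mem_iUnion] at hq
      obtain ⟨j, d, hd⟩ := hq
      rw [Functor.map_comp, comp_apply] at hd
      have hc₁ : I.map (G₁ j) d = c₁ := by
        apply (h2 g₁).1
        rw [hd, hg₁]
      have hd2 : I.map g₁ (I.map (G₁ j) d) = q.2 := hd
      have hd2' : I.map f₂ (I.map (G₂ j) d) = q.2 := by
        have := ConcreteCategory.congr_hom (congrArg I.map (hcomm j)) d
        rw [Functor.map_comp, Functor.map_comp, comp_apply, comp_apply] at this
        rw [← this]
        exact hd
      have hc₂ : I.map (G₂ j) d = c₂ := by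
        apply (h2 f₂).1
        rw [hd2', hf₂]
      refine ⟨w j, G₁ j ≫ f₁, G₂ j ≫ g₂, d, ?_, ?_⟩
      · rw [Functor.map_comp, comp_apply, hc₁, hf₁]
      · rw [Functor.map_comp, comp_apply, hc₂, hg₂]
  · rintro ⟨w, f, g, c, rfl, rfl⟩
    rw [colim_ι_map, colim_ι_map]

lemma colim_ι_isClosedMap
    (h2 : ∀ {x y : D} (f : x ⟶ y), Function.Injective (I.map f) ∧ IsClosedMap (I.map f))
    (h3 : ∀ {x₁ x₂ y : D} (f₁ : x₁ ⟶ y) (f₂ : x₂ ⟶ y),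
      (Set.range (I.map f₁) ∩ Set.range (I.map f₂)).Nonempty →
      ∃ (n : ℕ) (w : Fin n → D) (g₁ : ∀ j, w j ⟶ x₁) (g₂ : ∀ j, w j ⟶ x₂),
        (∀ j, g₁ j ≫ f₁ = g₂ j ≫ f₂) ∧
        Set.range (I.map f₁) ∩ Set.range (I.map f₂)
          = ⋃ j, Set.range (I.map (g₁ j ≫ f₁)))
    (x : D) : IsClosedMap (colimit.ι I x) := by
  intro C hC
  rw [← isOpen_compl_iff, TopCat.colimit_isOpen_iff.{0}]
  intro y
  rw [Set.preimage_compl, isOpen_compl_iff]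
  have key : (colimit.ι I y) ⁻¹' ((colimit.ι I x) '' C) =
      ⋃ (w : D), ⋃ (h : w ≤ x ∧ w ≤ y),
        I.map (homOfLE h.2) '' (I.map (homOfLE h.1) ⁻¹' C) := by
    ext b
    simp only [Set.mem_preimage, Set.mem_image, Set.mem_iUnion]
    constructor
    · rintro ⟨a, haC, hab⟩
      rw [colim_eq_iff I h2 h3] at hab
      obtain ⟨w, f, g, c, hfc, hgc⟩ := hab
      refine ⟨w, ⟨leOfHom f, leOfHom g⟩, c, ?_, ?_⟩
      · rw [Subsingleton.elim (homOfLE (leOfHom f)) f, hfc]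
        exact haC
      · rw [Subsingleton.elim (homOfLE (leOfHom g)) g]
        exact hgc
    · rintro ⟨w, hw, c, hcC, rfl⟩
      refine ⟨I.map (homOfLE hw.1) c, hcC, ?_⟩
      rw [colim_eq_iff I h2 h3]
      exact ⟨w, homOfLE hw.1, homOfLE hw.2, c, rfl, rfl⟩
  rw [key]
  apply isClosed_iUnion_of_finite
  intro w
  apply isClosed_iUnion_of_finite
  intro h
  exact (h2 (homOfLE h.2)).2 _ (hC.preimage (I.map (homOfLE h.1)).hom.continuous)

end Colim

/-- Let `D` be a finite poset (viewed as a category) and `I : D ⥤ Top` a functor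
such that each `I(x)` is T1 and normal, each `I(f)` is injective and closed, and intersections
of images are finite unions of images from common lower bounds.  Then the colimit `colim_D I`
is a T1 normal topological space. -/
theorem colimit_t1_normal {D : Type} [PartialOrder D] [Fintype D]
    (I : D ⥤ TopCat.{0})
    (h1 : ∀ x : D, T1Space (I.obj x) ∧ NormalSpace (I.obj x))
    (h2 : ∀ {x y : D} (f : x ⟶ y), Function.Injective (I.map f) ∧ IsClosedMap (I.map f))
    (h3 : ∀ {x₁ x₂ y : D} (f₁ : x₁ ⟶ y) (f₂ : x₂ ⟶ y),
      (Set.range (I.map f₁) ∩ Set.range (I.map f₂)).Nonempty →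
      ∃ (n : ℕ) (w : Fin n → D) (g₁ : ∀ j, w j ⟶ x₁) (g₂ : ∀ j, w j ⟶ x₂),
        (∀ j, g₁ j ≫ f₁ = g₂ j ≫ f₂) ∧
        Set.range (I.map f₁) ∩ Set.range (I.map f₂)
          = ⋃ j, Set.range (I.map (g₁ j ≫ f₁))) :
    T1Space (colimit I : TopCat.{0}) ∧ NormalSpace (colimit I : TopCat.{0}) := by
  have hclosed := colim_ι_isClosedMap I h2 h3
  have hT1 : T1Space (colimit I : TopCat.{0}) := by
    constructor
    intro p
    obtain ⟨x, a, rfl⟩ := Concrete.colimit_exists_rep I p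
    have : ({colimit.ι I x a} : Set (colimit I : TopCat.{0})) = colimit.ι I x '' {a} := by
      rw [Set.image_singleton]
    rw [this]
    haveI := (h1 x).1
    exact hclosed x _ (isClosed_singleton)
  refine ⟨hT1, ?_⟩
  -- normality via the finite closed cover by the images of the `I.obj x`
  apply normalSpace_of_finite_closed_cover (Finset.univ : Finset D)
    (A := fun x => Set.range (colimit.ι I x))
  · intro x
    have : Set.range (colimit.ι I x) = colimit.ι I x '' Set.univ := by
      rw [Set.image_univ]
    rw [this]
    exact hclosed x _ isClosed_univ
  · intro x
    haveI := (h1 x).2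
    have hinj : Function.Injective (colimit.ι I x) := by
      intro a a' h
      rw [colim_eq_iff I h2 h3] at h
      obtain ⟨w, f, g, c, hfc, hgc⟩ := h
      rw [← hfc, ← hgc, Subsingleton.elim f g]
    have hce : IsClosedEmbedding (colimit.ι I x) :=
      IsClosedEmbedding.of_continuous_injective_isClosedMap
        (colimit.ι I x).hom.continuous hinj (hclosed x)
    exact (hce.toIsEmbedding.toHomeomorph).symm.isClosedEmbedding.normalSpace
  · intro p
    obtain ⟨x, a, rfl⟩ := Concrete.colimit_exists_rep I p
    exact ⟨x, Finset.mem_univ x, ⟨a, rfl⟩⟩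
end

section
/- Let D be a finite poset (viewed as a category) and I : D → Top a functor such that: (i) for every object x, I(x) is a T1 normal topological space; (ii) for every morphism f of D, the continuous map I(f) is injective and closed; (iii) whenever f₁ : x₁ → y and f₂ : x₂ → y are morphisms of D with I(f₁)(I(x₁)) ∩ I(f₂)(I(x₂)) ≠ ∅, there exist finitely many objects w¹,…,wⁿ of D and morphisms g₁ʲ : wʲ → x₁, g₂ʲ : wʲ → x₂ with f₁∘g₁ʲ = f₂∘g₂ʲ for all j and I(f₁)(I(x₁)) ∩ I(f₂)(I(x₂)) = ⋃ⱼ I(f₁∘g₁ʲ)(I(wʲ)). Then for every object x of D, the canonical map I(x) → colim_D I is injective and closed. -/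
open CategoryTheory Limits Topology

/-- Key lemma: the equivalence relation generated by the colimit relation is contained
in the "common lower bound" relation. -/
lemma colimit_rel_key {D : Type} [PartialOrder D]
    (I : D ⥤ TopCat.{0})
    (h2 : ∀ {x y : D} (f : x ⟶ y), Function.Injective (I.map f) ∧ IsClosedMap (I.map f))
    (h3 : ∀ {x₁ x₂ y : D} (f₁ : x₁ ⟶ y) (f₂ : x₂ ⟶ y),
      (Set.range (I.map f₁) ∩ Set.range (I.map f₂)).Nonempty →
      ∃ (n : ℕ) (w : Fin n → D) (g₁ : ∀ j, w j ⟶ x₁) (g₂ : ∀ j, w j ⟶ x₂),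
        (∀ j, g₁ j ≫ f₁ = g₂ j ≫ f₂) ∧
        Set.range (I.map f₁) ∩ Set.range (I.map f₂)
          = ⋃ j, Set.range (I.map (g₁ j ≫ f₁)))
    (a b : Σ j : D, (I ⋙ forget TopCat).obj j)
    (hab : Relation.EqvGen (I ⋙ forget TopCat).ColimitTypeRel a b) :
    ∃ (w : D) (g : w ⟶ a.1) (h : w ⟶ b.1) (r : I.obj w),
      I.map g r = a.2 ∧ I.map h r = b.2 := by
  induction hab with
  | rel a b hr =>
    obtain ⟨f, hf⟩ := hr
    exact ⟨a.1, 𝟙 _, f, a.2, by simp, hf.symm⟩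
  | refl a =>
    exact ⟨a.1, 𝟙 _, 𝟙 _, a.2, by simp, by simp⟩
  | symm a b _ ih =>
    obtain ⟨w, g, h, r, hg, hh⟩ := ih
    exact ⟨w, h, g, r, hh, hg⟩
  | trans a b c _ _ ih₁ ih₂ =>
    obtain ⟨w, g, h, r, hg, hh⟩ := ih₁
    obtain ⟨w', g', h', r', hg', hh'⟩ := ih₂
    have hmem : (Set.range (I.map h) ∩ Set.range (I.map g')).Nonempty :=
      ⟨b.2, ⟨r, hh⟩, ⟨r', hg'⟩⟩
    obtain ⟨n, v, k₁, k₂, hcomm, hset⟩ := h3 h g' hmem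
    have hb : b.2 ∈ ⋃ j, Set.range (I.map (k₁ j ≫ h)) := by
      rw [← hset]; exact ⟨⟨r, hh⟩, ⟨r', hg'⟩⟩
    obtain ⟨j, t, ht⟩ := by
      simpa only [Set.mem_iUnion, Set.mem_range] using hb
    have ht' : I.map (k₂ j ≫ g') t = b.2 := by rw [← hcomm j]; exact ht
    have e₁ : I.map (k₁ j) t = r := (h2 h).1 (by
      show I.map h (I.map (k₁ j) t) = I.map h r
      rw [hh, ← ht, I.map_comp]; rfl)
    have e₂ : I.map (k₂ j) t = r' := (h2 g').1 (by
      show I.map g' (I.map (k₂ j) t) = I.map g' r'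
      rw [hg', ← ht', I.map_comp]; rfl)
    refine ⟨v j, k₁ j ≫ g, k₂ j ≫ h', t, ?_, ?_⟩
    · rw [I.map_comp]
      show I.map g (I.map (k₁ j) t) = a.2
      rw [e₁, hg]
    · rw [I.map_comp]
      show I.map h' (I.map (k₂ j) t) = c.2
      rw [e₂, hh']

/-- under the hypotheses on the diagram `I`, for every object `x` the
canonical map `I(x) → colim_D I` is injective and closed. -/
theorem colimit_ι_injective_closed {D : Type} [PartialOrder D] [Fintype D]
    (I : D ⥤ TopCat.{0})
    (h1 : ∀ x : D, T1Space (I.obj x) ∧ NormalSpace (I.obj x))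
    (h2 : ∀ {x y : D} (f : x ⟶ y), Function.Injective (I.map f) ∧ IsClosedMap (I.map f))
    (h3 : ∀ {x₁ x₂ y : D} (f₁ : x₁ ⟶ y) (f₂ : x₂ ⟶ y),
      (Set.range (I.map f₁) ∩ Set.range (I.map f₂)).Nonempty →
      ∃ (n : ℕ) (w : Fin n → D) (g₁ : ∀ j, w j ⟶ x₁) (g₂ : ∀ j, w j ⟶ x₂),
        (∀ j, g₁ j ≫ f₁ = g₂ j ≫ f₂) ∧
        Set.range (I.map f₁) ∩ Set.range (I.map f₂)
          = ⋃ j, Set.range (I.map (g₁ j ≫ f₁))) :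
    ∀ x : D, Function.Injective (colimit.ι I x : I.obj x ⟶ (colimit I : TopCat.{0})) ∧
      IsClosedMap (colimit.ι I x : I.obj x ⟶ (colimit I : TopCat.{0})) := by
  intro x
  set F := I ⋙ forget TopCat with hF
  -- the explicit colimit cocone
  set E := TopCat.coconeOfCoconeForget (Types.TypeMax.colimitCocone.{0,0} F) with hEdef
  let hE : IsColimit E :=
    TopCat.isColimitCoconeOfForget _ (Types.TypeMax.colimitCoconeIsColimit.{0,0} F)
  let e : colimit I ≅ E.pt := colimit.isoColimitCocone ⟨E, hE⟩
  have hfac : ∀ y : D, colimit.ι I y = E.ι.app y ≫ e.inv := by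
    intro y
    rw [eq_comm, Iso.comp_inv_eq]
    exact (colimit.isoColimitCocone_ι_hom ⟨E, hE⟩ y).symm
  -- injectivity and closedness of the explicit cocone legs
  have hιdef : ∀ (y : D) (p : I.obj y),
      E.ι.app y p = Quot.mk (F.ColimitTypeRel) ⟨y, p⟩ := fun _ _ => rfl
  have hinj : ∀ y : D, Function.Injective (E.ι.app y) := by
    intro y p p' hpp'
    have h := Quot.eqvGen_exact ((hιdef y p) ▸ (hιdef y p') ▸ hpp')
    obtain ⟨w, g, h', r, hg, hh⟩ := colimit_rel_key I @h2 @h3 ⟨y, p⟩ ⟨y, p'⟩ h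
    have hg' : I.map g r = p := hg
    have hh' : I.map h' r = p' := hh
    have : g = h' := Subsingleton.elim _ _
    rw [← hg', ← hh', this]
  have hclosed : ∀ y : D, IsClosedMap (E.ι.app y) := by
    intro y C hC
    have key : ∀ z : D, (E.ι.app z) ⁻¹' ((E.ι.app y) '' C) =
        ⋃ (w : D) (_ : w ≤ y) (_ : w ≤ z),
          I.map (homOfLE ‹w ≤ z›) '' (I.map (homOfLE ‹w ≤ y›) ⁻¹' C) := by
      intro z
      ext q
      simp only [Set.mem_preimage, Set.mem_image, Set.mem_iUnion]
      constructor
      · rintro ⟨p, hpC, hpq⟩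
        have h := Quot.eqvGen_exact ((hιdef y p) ▸ (hιdef z q) ▸ hpq)
        obtain ⟨w, g, h', r, hg, hh⟩ := colimit_rel_key I @h2 @h3 ⟨y, p⟩ ⟨z, q⟩ h
        have hg' : I.map g r = p := hg
        have hh' : I.map h' r = q := hh
        refine ⟨w, leOfHom g, leOfHom h', r, ?_, ?_⟩
        · show I.map (homOfLE (leOfHom g)) r ∈ C
          rw [show homOfLE (leOfHom g) = g from Subsingleton.elim _ _, hg']
          exact hpC
        · rw [show homOfLE (leOfHom h') = h' from Subsingleton.elim _ _, hh']
      · rintro ⟨w, hwy, hwz, r, hrC, hrq⟩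
        refine ⟨I.map (homOfLE hwy) r, hrC, ?_⟩
        rw [hιdef, hιdef, ← hrq]
        have s1 : Quot.mk (F.ColimitTypeRel) ⟨w, r⟩
            = Quot.mk (F.ColimitTypeRel) ⟨y, F.map (homOfLE hwy) r⟩ :=
          Quot.sound ⟨homOfLE hwy, rfl⟩
        have s2 : Quot.mk (F.ColimitTypeRel) ⟨w, r⟩
            = Quot.mk (F.ColimitTypeRel) ⟨z, F.map (homOfLE hwz) r⟩ :=
          Quot.sound ⟨homOfLE hwz, rfl⟩
        exact s1.symm.trans s2
    -- the topology on the colimit point is the sup of the coinduced topologies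
    have : IsClosed[⨆ j, TopologicalSpace.coinduced
        ((Types.TypeMax.colimitCocone.{0,0} F).ι.app j) (I.obj j).str]
        ((E.ι.app y) '' C) := by
      rw [isClosed_iSup_iff]
      intro z
      refine isClosed_coinduced.2 ?_
      show IsClosed ((E.ι.app z) ⁻¹' ((E.ι.app y) '' C))
      rw [key z]
      apply isClosed_iUnion_of_finite
      intro w
      apply isClosed_iUnion_of_finite
      intro hwy
      apply isClosed_iUnion_of_finite
      intro hwz
      exact (h2 (homOfLE hwz)).2 _ (hC.preimage (I.map (homOfLE hwy)).hom.continuous)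
    exact this
  constructor
  · rw [hfac x]
    intro p p' h
    have : e.inv (E.ι.app x p) = e.inv (E.ι.app x p') := h
    exact hinj x ((TopCat.homeoOfIso e).symm.injective this)
  · rw [hfac x]
    have : ⇑(E.ι.app x ≫ e.inv) = ⇑e.inv ∘ ⇑(E.ι.app x) := rfl
    rw [this]
    exact ((TopCat.homeoOfIso e).symm.isClosedMap).comp (hclosed x)
end

section
/- Let D be a finite poset (viewed as a category) and I : D → Top a functor such that: (i) for every object x, I(x) is a T1 normal topological space; (ii) for every morphism f of D, the continuous map I(f) is injective and closed; (iii) whenever f₁ : x₁ → y and f₂ : x₂ → y are morphisms of D with I(f₁)(I(x₁)) ∩ I(f₂)(I(x₂)) ≠ ∅, there exist finitely many objects w¹,…,wⁿ of D and morphisms g₁ʲ : wʲ → x₁, g₂ʲ : wʲ → x₂ with f₁∘g₁ʲ = f₂∘g₂ʲ for all j and I(f₁)(I(x₁)) ∩ I(f₂)(I(x₂)) = ⋃ⱼ I(f₁∘g₁ʲ)(I(wʲ)). Let f̂₁ : I(x₁) → colim_D I and f̂₂ : I(x₂) → colim_D I be the canonical maps and suppose f̂₁(I(x₁)) ∩ f̂₂(I(x₂))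 ≠ ∅. If w¹,…,wⁿ are exactly those objects w of D admitting morphisms to both x₁ and x₂, and g₁ʲ : wʲ → x₁ denotes the (unique) morphism, then f̂₁(I(x₁)) ∩ f̂₂(I(x₂)) = ⋃ⱼ (f̂₁ ∘ I(g₁ʲ))(I(wʲ)). -/
open CategoryTheory Limits

/-- Any zigzag relation in the colimit of `I` collapses to a single span,
given injectivity of the maps and the intersection condition `h3`. -/
lemma span_of_eqvGen {D : Type} [PartialOrder D] [Fintype D] (I : D ⥤ TopCat.{0})
    (h2 : ∀ {x y : D} (f : x ⟶ y), Function.Injective (I.map f) ∧ IsClosedMap (I.map f))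
    (h3 : ∀ {x₁ x₂ y : D} (f₁ : x₁ ⟶ y) (f₂ : x₂ ⟶ y),
      (Set.range (I.map f₁) ∩ Set.range (I.map f₂)).Nonempty →
      ∃ (n : ℕ) (w : Fin n → D) (g₁ : ∀ j, w j ⟶ x₁) (g₂ : ∀ j, w j ⟶ x₂),
        (∀ j, g₁ j ≫ f₁ = g₂ j ≫ f₂) ∧
        Set.range (I.map f₁) ∩ Set.range (I.map f₂)
          = ⋃ j, Set.range (I.map (g₁ j ≫ f₁)))
    {p q : Σ z : D, (I ⋙ forget TopCat).obj z}
    (h : Relation.EqvGen (Functor.ColimitTypeRel (I ⋙ forget TopCat)) p q) :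
    ∃ (z : D) (f : z ⟶ p.1) (g : z ⟶ q.1) (c : I.obj z),
      I.map f c = p.2 ∧ I.map g c = q.2 := by
  induction h with
  | rel p q hpq =>
      obtain ⟨f, hf⟩ := hpq
      exact ⟨p.1, 𝟙 _, f, p.2, by simp, hf.symm⟩
  | refl p => exact ⟨p.1, 𝟙 _, 𝟙 _, p.2, by simp, by simp⟩
  | symm p q _ ih =>
      obtain ⟨z, f, g, c, hc1, hc2⟩ := ih
      exact ⟨z, g, f, c, hc2, hc1⟩
  | trans p q r _ _ ih1 ih2 =>
      obtain ⟨z, f, g, c, hc1, hc2⟩ := ih1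
      obtain ⟨z', f', g', c', hc1', hc2'⟩ := ih2
      have hmem : (q.2 : I.obj q.1) ∈ Set.range (I.map g) ∩ Set.range (I.map f') :=
        ⟨⟨c, hc2⟩, ⟨c', hc1'⟩⟩
      obtain ⟨m, ws, G₁, G₂, hcomm, heq⟩ := h3 g f' ⟨q.2, hmem⟩
      have hq : (q.2 : I.obj q.1) ∈ ⋃ j, Set.range (I.map (G₁ j ≫ g)) := heq ▸ hmem
      obtain ⟨j, d, hd⟩ := Set.mem_iUnion.1 hq
      have hd1 : I.map g (I.map (G₁ j) d) = q.2 := by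
        rw [← hd, I.map_comp]; rfl
      have hd2 : I.map f' (I.map (G₂ j) d) = q.2 := by
        have : I.map (G₂ j ≫ f') d = q.2 := by rw [← hcomm j]; exact hd
        rw [← this, I.map_comp]; rfl
      have e1 : I.map (G₁ j) d = c := (h2 g).1 (by rw [hd1, hc2])
      have e2 : I.map (G₂ j) d = c' := (h2 f').1 (by rw [hd2, hc1'])
      refine ⟨ws j, G₁ j ≫ f, G₂ j ≫ g', d, ?_, ?_⟩
      · rw [I.map_comp]; show I.map f (I.map (G₁ j) d) = p.2; rw [e1, hc1]
      · rw [I.map_comp]; show I.map g' (I.map (G₂ j) d) = r.2; rw [e2, hc2']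

/-- under the hypotheses on the diagram `I`, if the images of `I(x₁)` and
`I(x₂)` in the colimit meet, and `w¹,…,wⁿ` enumerates exactly the objects admitting
morphisms to both `x₁` and `x₂` (with `g₁ʲ : wʲ ⟶ x₁` the unique such morphisms), then
the intersection of the images equals the union of the images of the `I(wʲ)`. -/
theorem colimit_intersection_of_images {D : Type} [PartialOrder D] [Fintype D]
    (I : D ⥤ TopCat.{0})
    (h1 : ∀ x : D, T1Space (I.obj x) ∧ NormalSpace (I.obj x))
    (h2 : ∀ {x y : D} (f : x ⟶ y), Function.Injective (I.map f) ∧ IsClosedMap (I.map f))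
    (h3 : ∀ {x₁ x₂ y : D} (f₁ : x₁ ⟶ y) (f₂ : x₂ ⟶ y),
      (Set.range (I.map f₁) ∩ Set.range (I.map f₂)).Nonempty →
      ∃ (n : ℕ) (w : Fin n → D) (g₁ : ∀ j, w j ⟶ x₁) (g₂ : ∀ j, w j ⟶ x₂),
        (∀ j, g₁ j ≫ f₁ = g₂ j ≫ f₂) ∧
        Set.range (I.map f₁) ∩ Set.range (I.map f₂)
          = ⋃ j, Set.range (I.map (g₁ j ≫ f₁)))
    (x₁ x₂ : D)
    (hne : (Set.range (colimit.ι I x₁ : I.obj x₁ ⟶ (colimit I : TopCat.{0})) ∩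
            Set.range (colimit.ι I x₂ : I.obj x₂ ⟶ (colimit I : TopCat.{0}))).Nonempty)
    (n : ℕ) (w : Fin n → D)
    (hw_inj : Function.Injective w)
    (hw : ∀ z : D, (Nonempty (z ⟶ x₁) ∧ Nonempty (z ⟶ x₂)) ↔ ∃ j, w j = z)
    (g₁ : ∀ j, w j ⟶ x₁) :
    Set.range (colimit.ι I x₁ : I.obj x₁ ⟶ (colimit I : TopCat.{0})) ∩
      Set.range (colimit.ι I x₂ : I.obj x₂ ⟶ (colimit I : TopCat.{0}))
      = ⋃ j, Set.range ((colimit.ι I x₁ : I.obj x₁ ⟶ (colimit I : TopCat.{0})) ∘ I.map (g₁ j)) := by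
  ext p
  simp only [Set.mem_inter_iff, Set.mem_range, Set.mem_iUnion, Function.comp_apply]
  constructor
  · rintro ⟨⟨a, ha⟩, ⟨b, hb⟩⟩
    have hab : colimit.ι I x₁ a = colimit.ι I x₂ b := ha.trans hb.symm
    have key : colimit.ι (I ⋙ forget TopCat) x₁ a = colimit.ι (I ⋙ forget TopCat) x₂ b := by
      rw [← ι_preservesColimitIso_hom (forget TopCat) I x₁,
        ← ι_preservesColimitIso_hom (forget TopCat) I x₂]
      simp only [types_comp_apply]
      exact congrArg _ hab
    obtain ⟨z, f, g, c, hc1, hc2⟩ := span_of_eqvGen I @h2 @h3 (Types.colimit_eq key)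
    obtain ⟨j, hj⟩ := (hw z).1 ⟨⟨f⟩, ⟨g⟩⟩
    subst hj
    refine ⟨j, c, ?_⟩
    have : f = g₁ j := Subsingleton.elim _ _
    rw [← this, hc1, ha]
  · rintro ⟨j, c, hc⟩
    refine ⟨⟨I.map (g₁ j) c, hc⟩, ?_⟩
    obtain ⟨g₂j⟩ := ((hw (w j)).2 ⟨j, rfl⟩).2
    refine ⟨I.map g₂j c, ?_⟩
    have e1 := ConcreteCategory.congr_hom (colimit.w I (g₁ j)) c
    have e2 := ConcreteCategory.congr_hom (colimit.w I g₂j) c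
    simp only [comp_apply] at e1 e2
    rw [e2, ← e1, hc]
end

section
/- Let D be a finite poset (viewed as a category) and I : D → Top a functor such that: (i) for every object x, I(x) is a T1 normal topological space; (ii) for every morphism f of D, the continuous map I(f) is injective and closed; (iii) whenever f₁ : x₁ → y and f₂ : x₂ → y are morphisms of D with I(f₁)(I(x₁)) ∩ I(f₂)(I(x₂)) ≠ ∅, there exist finitely many objects w¹,…,wⁿ of D and morphisms g₁ʲ : wʲ → x₁, g₂ʲ : wʲ → x₂ with f₁∘g₁ʲ = f₂∘g₂ʲ for all j and I(f₁)(I(x₁)) ∩ I(f₂)(I(x₂)) = ⋃ⱼ I(f₁∘g₁ʲ)(I(wʲ)). Then the quotient map q : ⨆_{x∈D} I(x) → colim_D I is a closed map. -/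
open CategoryTheory Limits

section Aux

variable {D : Type} [PartialOrder D] (I : D ⥤ TopCat.{0})

/-- A set in the colimit is closed if all its preimages under the legs are closed. -/
lemma aux_isClosed_colimit (S : Set (colimit I : TopCat.{0}))
    (h : ∀ j : D, IsClosed ((colimit.ι I j : I.obj j ⟶ _) ⁻¹' S)) : IsClosed S := by
  exact (TopCat.isClosed_iff_of_isColimit _ (colimit.isColimit I) S).mpr h

variable {I}

/-- "valley" relation -/
def Valley (p q : Σ x : D, (I.obj x : Type)) : Prop :=
  ∃ (w : D) (f : w ⟶ p.1) (g : w ⟶ q.1) (r : I.obj w),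
    I.map f r = p.2 ∧ I.map g r = q.2

lemma valley_of_eqvGen
    (h2 : ∀ {x y : D} (f : x ⟶ y), Function.Injective (I.map f) ∧ IsClosedMap (I.map f))
    (h3 : ∀ {x₁ x₂ y : D} (f₁ : x₁ ⟶ y) (f₂ : x₂ ⟶ y),
      (Set.range (I.map f₁) ∩ Set.range (I.map f₂)).Nonempty →
      ∃ (n : ℕ) (w : Fin n → D) (g₁ : ∀ j, w j ⟶ x₁) (g₂ : ∀ j, w j ⟶ x₂),
        (∀ j, g₁ j ≫ f₁ = g₂ j ≫ f₂) ∧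
        Set.range (I.map f₁) ∩ Set.range (I.map f₂)
          = ⋃ j, Set.range (I.map (g₁ j ≫ f₁)))
    {p q : Σ x : D, ((I ⋙ forget TopCat).obj x)}
    (h : Relation.EqvGen ((I ⋙ forget TopCat).ColimitTypeRel) p q) :
    Valley p q := by
  induction h with
  | rel p q hpq =>
      obtain ⟨f, hf⟩ := hpq
      exact ⟨p.1, 𝟙 p.1, f, p.2, by simp, hf.symm⟩
  | refl p => exact ⟨p.1, 𝟙 p.1, 𝟙 p.1, p.2, by simp, by simp⟩
  | symm p q _ ih =>
      obtain ⟨w, f, g, r, hf, hg⟩ := ih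
      exact ⟨w, g, f, r, hg, hf⟩
  | trans p q r _ _ ih1 ih2 =>
      obtain ⟨w, f, g, s, hf, hg⟩ := ih1
      obtain ⟨w', f', g', s', hf', hg'⟩ := ih2
      have hne : (Set.range (I.map g) ∩ Set.range (I.map f')).Nonempty :=
        ⟨q.2, ⟨s, hg⟩, ⟨s', hf'⟩⟩
      obtain ⟨n, v, g₁, g₂, hcomm, heq⟩ := h3 g f' hne
      have hq : q.2 ∈ ⋃ j, Set.range (I.map (g₁ j ≫ g)) := heq ▸ ⟨⟨s, hg⟩, ⟨s', hf'⟩⟩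
      obtain ⟨j, t, ht⟩ := Set.mem_iUnion.1 hq
      have ht1 : I.map (g₁ j) t = s := by
        apply (h2 g).1
        rw [← TopCat.comp_app, ← I.map_comp, ht, hg]
      have ht2 : I.map (g₂ j) t = s' := by
        apply (h2 f').1
        rw [← TopCat.comp_app, ← I.map_comp, ← hcomm j, ht, hf']
      refine ⟨v j, g₁ j ≫ f, g₂ j ≫ g', t, ?_, ?_⟩
      · rw [I.map_comp, TopCat.comp_app, ht1, hf]
      · rw [I.map_comp, TopCat.comp_app, ht2, hg']

lemma valley_of_leg_eq
    (h2 : ∀ {x y : D} (f : x ⟶ y), Function.Injective (I.map f) ∧ IsClosedMap (I.map f))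
    (h3 : ∀ {x₁ x₂ y : D} (f₁ : x₁ ⟶ y) (f₂ : x₂ ⟶ y),
      (Set.range (I.map f₁) ∩ Set.range (I.map f₂)).Nonempty →
      ∃ (n : ℕ) (w : Fin n → D) (g₁ : ∀ j, w j ⟶ x₁) (g₂ : ∀ j, w j ⟶ x₂),
        (∀ j, g₁ j ≫ f₁ = g₂ j ≫ f₂) ∧
        Set.range (I.map f₁) ∩ Set.range (I.map f₂)
          = ⋃ j, Set.range (I.map (g₁ j ≫ f₁)))
    {x y : D} {a : I.obj x} {b : I.obj y}
    (h : (colimit.ι I x : I.obj x ⟶ _) a = (colimit.ι I y : I.obj y ⟶ _) b) :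
    Valley (⟨x, a⟩ : Σ x : D, (I.obj x : Type)) ⟨y, b⟩ := by
  have heq : colimit.ι (I ⋙ forget TopCat) x a = colimit.ι (I ⋙ forget TopCat) y b := by
    have hx := congrArg (fun f => f a)
      (ι_preservesColimitIso_hom (forget TopCat) I x)
    have hy := congrArg (fun f => f b)
      (ι_preservesColimitIso_hom (forget TopCat) I y)
    dsimp at hx hy
    rw [← hx, ← hy]
    exact congrArg _ h
  exact valley_of_eqvGen h2 h3 (Types.colimit_eq heq)

end Aux

/-- under the hypotheses on the diagram `I`, the quotient map
`q : ⨆ₓ I(x) → colim_D I` from the disjoint union (sigma type) to the colimit is a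
closed map. -/
theorem colimit_quotient_map_closed {D : Type} [PartialOrder D] [Fintype D]
    (I : D ⥤ TopCat.{0})
    (h1 : ∀ x : D, T1Space (I.obj x) ∧ NormalSpace (I.obj x))
    (h2 : ∀ {x y : D} (f : x ⟶ y), Function.Injective (I.map f) ∧ IsClosedMap (I.map f))
    (h3 : ∀ {x₁ x₂ y : D} (f₁ : x₁ ⟶ y) (f₂ : x₂ ⟶ y),
      (Set.range (I.map f₁) ∩ Set.range (I.map f₂)).Nonempty →
      ∃ (n : ℕ) (w : Fin n → D) (g₁ : ∀ j, w j ⟶ x₁) (g₂ : ∀ j, w j ⟶ x₂),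
        (∀ j, g₁ j ≫ f₁ = g₂ j ≫ f₂) ∧
        Set.range (I.map f₁) ∩ Set.range (I.map f₂)
          = ⋃ j, Set.range (I.map (g₁ j ≫ f₁))) :
    IsClosedMap (fun p : Σ x : D, (I.obj x : Type) =>
      (colimit.ι I p.1 : I.obj p.1 ⟶ (colimit I : TopCat.{0})) p.2) := by
  -- key: each leg is "closed" in the sense that images of closed sets pull back closed
  have key : ∀ (x : D) (A : Set (I.obj x)), IsClosed A →
      IsClosed ((colimit.ι I x : I.obj x ⟶ _) '' A) := by
    intro x A hA
    apply aux_isClosed_colimit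
    intro y
    have hset : (colimit.ι I y : I.obj y ⟶ _) ⁻¹' ((colimit.ι I x : I.obj x ⟶ _) '' A)
        = ⋃ (w : D), ⋃ (f : w ⟶ x), ⋃ (g : w ⟶ y),
            I.map g '' (I.map f ⁻¹' A) := by
      ext p
      simp only [Set.mem_preimage, Set.mem_image, Set.mem_iUnion]
      constructor
      · rintro ⟨a, ha, hab⟩
        obtain ⟨w, f, g, r, hf, hg⟩ := valley_of_leg_eq h2 h3 hab
        exact ⟨w, f, g, r, by rw [hf]; exact ha, hg⟩
      · rintro ⟨w, f, g, r, hr, hrp⟩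
        refine ⟨I.map f r, hr, ?_⟩
        rw [← hrp, ← TopCat.comp_app, ← TopCat.comp_app, colimit.w, colimit.w]
    rw [hset]
    refine isClosed_iUnion_of_finite fun w => isClosed_iUnion_of_finite fun f =>
      isClosed_iUnion_of_finite fun g => (h2 g).2 _ ((hA.preimage (I.map f).hom.continuous))
  intro C hC
  have himg : (fun p : Σ x : D, (I.obj x : Type) =>
      (colimit.ι I p.1 : I.obj p.1 ⟶ (colimit I : TopCat.{0})) p.2) '' C
      = ⋃ (x : D), (colimit.ι I x : I.obj x ⟶ _) '' ((fun a : (I.obj x : Type) => (⟨x, a⟩ : Σ y : D, (I.obj y : Type))) ⁻¹' C) := by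
    ext z
    simp only [Set.mem_image, Set.mem_iUnion, Set.mem_preimage]
    constructor
    · rintro ⟨⟨x, a⟩, hmem, rfl⟩
      exact ⟨x, a, hmem, rfl⟩
    · rintro ⟨x, a, hmem, rfl⟩
      exact ⟨⟨x, a⟩, hmem, rfl⟩
  rw [himg]
  exact isClosed_iUnion_of_finite fun x =>
    key x _ (hC.preimage continuous_sigmaMk)
end

section
/- Let D be a finite poset (viewed as a category) and I : D → Top a functor such that: (i) for every object x, I(x) is a T1 normal topological space; (ii) for every morphism f of D, the continuous map I(f) is injective and closed; (iii) whenever f₁ : x₁ → y and f₂ : x₂ → y are morphisms of D with I(f₁)(I(x₁)) ∩ I(f₂)(I(x₂)) ≠ ∅, there exist finitely many objects w¹,…,wⁿ of D and morphisms g₁ʲ : wʲ → x₁, g₂ʲ : wʲ → x₂ with f₁∘g₁ʲ = f₂∘g₂ʲ for all j and I(f₁)(I(x₁)) ∩ I(f₂)(I(x₂)) = ⋃ⱼ I(f₁∘g₁ʲ)(I(wʲ)). Then for objects x, y of D and points a ∈ I(x), b ∈ I(y), the images of a and b in colim_D I coincide if and only if there exist an object z of D, a point p ∈ I(z), and morphisms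 f : z → x and g : z → y with I(f)(p) = a and I(g)(p) = b. -/
open CategoryTheory Limits

lemma common_preimage_of_eqvGen {D : Type} [PartialOrder D]
    (I : D ⥤ TopCat.{0})
    (h2 : ∀ {x y : D} (f : x ⟶ y), Function.Injective (I.map f) ∧ IsClosedMap (I.map f))
    (h3 : ∀ {x₁ x₂ y : D} (f₁ : x₁ ⟶ y) (f₂ : x₂ ⟶ y),
      (Set.range (I.map f₁) ∩ Set.range (I.map f₂)).Nonempty →
      ∃ (n : ℕ) (w : Fin n → D) (g₁ : ∀ j, w j ⟶ x₁) (g₂ : ∀ j, w j ⟶ x₂),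
        (∀ j, g₁ j ≫ f₁ = g₂ j ≫ f₂) ∧
        Set.range (I.map f₁) ∩ Set.range (I.map f₂)
          = ⋃ j, Set.range (I.map (g₁ j ≫ f₁)))
    (p q : Σ x : D, (I ⋙ forget TopCat).obj x)
    (h : Relation.EqvGen (I ⋙ forget TopCat).ColimitTypeRel p q) :
    ∃ (z : D) (pt : I.obj z) (f : z ⟶ p.1) (g : z ⟶ q.1),
      I.map f pt = p.2 ∧ I.map g pt = q.2 := by
  induction h with
  | rel p q hpq =>
      obtain ⟨f, hf⟩ := hpq
      exact ⟨p.1, p.2, 𝟙 p.1, f, by simp, hf.symm⟩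
  | refl p => exact ⟨p.1, p.2, 𝟙 p.1, 𝟙 p.1, by simp, by simp⟩
  | symm p q _ ih =>
      obtain ⟨z, pt, f, g, hf, hg⟩ := ih
      exact ⟨z, pt, g, f, hg, hf⟩
  | trans p q r _ _ ih1 ih2 =>
      obtain ⟨z₁, p₁, f₁, g₁, hf₁, hg₁⟩ := ih1
      obtain ⟨z₂, p₂, f₂, g₂, hf₂, hg₂⟩ := ih2
      have hne : (Set.range (I.map g₁) ∩ Set.range (I.map f₂)).Nonempty :=
        ⟨q.2, ⟨p₁, hg₁⟩, ⟨p₂, hf₂⟩⟩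
      obtain ⟨n, w, a₁, a₂, hcomm, hcover⟩ := h3 g₁ f₂ hne
      have hq : (q.2 : I.obj q.1) ∈ ⋃ j, Set.range (I.map (a₁ j ≫ g₁)) := by
        rw [← hcover]; exact ⟨⟨p₁, hg₁⟩, ⟨p₂, hf₂⟩⟩
      obtain ⟨S, ⟨j, rfl⟩, s, hs⟩ := hq
      have hs1 : I.map (a₁ j) s = p₁ := by
        apply (h2 g₁).1
        rw [hg₁, ← hs, I.map_comp]
        rfl
      have hs2 : I.map (a₂ j) s = p₂ := by
        apply (h2 f₂).1
        rw [hf₂, ← hs, hcomm j, I.map_comp]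
        rfl
      refine ⟨w j, s, a₁ j ≫ f₁, a₂ j ≫ g₂, ?_, ?_⟩
      · rw [I.map_comp]
        show I.map f₁ (I.map (a₁ j) s) = p.2
        rw [hs1, hf₁]
      · rw [I.map_comp]
        show I.map g₂ (I.map (a₂ j) s) = r.2
        rw [hs2, hg₂]

/-- under the hypotheses on the diagram `I`, two points `a ∈ I(x)`,
`b ∈ I(y)` have the same image in the colimit iff they have a common preimage
`p ∈ I(z)` along morphisms `f : z ⟶ x`, `g : z ⟶ y`. -/
theorem colimit_eq_iff_common_preimage {D : Type} [PartialOrder D] [Fintype D]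
    (I : D ⥤ TopCat.{0})
    (h1 : ∀ x : D, T1Space (I.obj x) ∧ NormalSpace (I.obj x))
    (h2 : ∀ {x y : D} (f : x ⟶ y), Function.Injective (I.map f) ∧ IsClosedMap (I.map f))
    (h3 : ∀ {x₁ x₂ y : D} (f₁ : x₁ ⟶ y) (f₂ : x₂ ⟶ y),
      (Set.range (I.map f₁) ∩ Set.range (I.map f₂)).Nonempty →
      ∃ (n : ℕ) (w : Fin n → D) (g₁ : ∀ j, w j ⟶ x₁) (g₂ : ∀ j, w j ⟶ x₂),
        (∀ j, g₁ j ≫ f₁ = g₂ j ≫ f₂) ∧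
        Set.range (I.map f₁) ∩ Set.range (I.map f₂)
          = ⋃ j, Set.range (I.map (g₁ j ≫ f₁))) :
    ∀ (x y : D) (a : I.obj x) (b : I.obj y),
      (colimit.ι I x : I.obj x ⟶ (colimit I : TopCat.{0})) a =
        (colimit.ι I y : I.obj y ⟶ (colimit I : TopCat.{0})) b ↔
      ∃ (z : D) (p : I.obj z) (f : z ⟶ x) (g : z ⟶ y),
        I.map f p = a ∧ I.map g p = b := by
  intro x y a b
  constructor
  · intro h
    have h' : colimit.ι (I ⋙ forget TopCat) x a = colimit.ι (I ⋙ forget TopCat) y b := by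
      rw [← ι_preservesColimitIso_hom (forget TopCat) I x,
        ← ι_preservesColimitIso_hom (forget TopCat) I y]
      exact congrArg (preservesColimitIso (forget TopCat) I).hom h
    exact common_preimage_of_eqvGen I h2 h3 ⟨x, a⟩ ⟨y, b⟩ (Types.colimit_eq h')
  · rintro ⟨z, p, f, g, rfl, rfl⟩
    have hf := ConcreteCategory.congr_hom (colimit.w I f) p
    have hg := ConcreteCategory.congr_hom (colimit.w I g) p
    simp only [comp_apply] at hf hg
    rw [hf, hg]
end
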